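/- Let ε : R → A be a ring morphism, let Σ be the set of all square matrices over R that become invertible over A under ε, and let Σ^{-1}R be the Cohn localization of R inverting Σ. Then an endomorphism φ : (Σ^{-1}R)^n → (Σ^{-1}R)^n of a finitely generated free Σ^{-1}R-module is an automorphism if and only if the induced endomorphism ε(φ) : A^n → A^n is an A-module automorphism. -/

import Mathlib

open Matrix

section helpers
variable {α : Type} [Ring α]

/-- invertibility of a block upper triangular matrix with invertible diagonal blocks -/
lemma aux_tri {m n : Type} [Fintype m] [Fintype n] [DecidableEq m] [DecidableEq n]
    {P : Matrix m m α} (Q : Matrix m n α) {D : Matrix n n α}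
    (hP : IsUnit P) (hD : IsUnit D) : IsUnit (fromBlocks P Q 0 D) := by
  obtain ⟨u, hu⟩ := hP
  obtain ⟨v, hv⟩ := hD
  set P' : Matrix m m α := (u⁻¹ : (Matrix m m α)ˣ).val with hP'
  set D' : Matrix n n α := (v⁻¹ : (Matrix n n α)ˣ).val with hD'
  have hPP' : P * P' = 1 := by rw [← hu, hP']; exact u.mul_inv
  have hP'P : P' * P = 1 := by rw [← hu, hP']; exact u.inv_mul
  have hDD' : D * D' = 1 := by rw [← hv, hD']; exact v.mul_inv
  have hD'D : D' * D = 1 := by rw [← hv, hD']; exact v.inv_mul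
  refine ⟨⟨fromBlocks P Q 0 D, fromBlocks P' (-(P' * Q * D')) 0 D', ?_, ?_⟩, rfl⟩
  · rw [fromBlocks_multiply]
    rw [show P * -(P' * Q * D') + Q * D' = 0 by
      rw [Matrix.mul_neg, ← Matrix.mul_assoc, ← Matrix.mul_assoc, hPP', Matrix.one_mul,
        neg_add_cancel]]
    simp [hPP', hDD', fromBlocks_one]
  · rw [fromBlocks_multiply]
    rw [show P' * Q + -(P' * Q * D') * D = 0 by
      rw [Matrix.neg_mul, Matrix.mul_assoc, Matrix.mul_assoc, hD'D, Matrix.mul_one,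
        add_neg_cancel]]
    simp [hP'P, hD'D, fromBlocks_one]

lemma aux_diag {m n : Type} [Fintype m] [Fintype n] [DecidableEq m] [DecidableEq n]
    {P : Matrix m m α} {D : Matrix n n α}
    (hP : IsUnit P) (hD : IsUnit D) : IsUnit (fromBlocks P 0 0 D) :=
  aux_tri 0 hP hD

/-- extract invertibility of the top-left block of an invertible block diagonal matrix -/
lemma aux_diag_rev {m n : Type} [Fintype m] [Fintype n] [DecidableEq m] [DecidableEq n]
    {P : Matrix m m α} {D : Matrix n n α}
    (h : IsUnit (fromBlocks P 0 0 D)) : IsUnit P := by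
  obtain ⟨u, hu⟩ := h
  have h1 : fromBlocks P 0 0 D * (u⁻¹ : (Matrix (m ⊕ n) (m ⊕ n) α)ˣ).val = 1 := by rw [← hu]; exact u.mul_inv
  have h2 : (u⁻¹ : (Matrix (m ⊕ n) (m ⊕ n) α)ˣ).val * fromBlocks P 0 0 D = 1 := by
    rw [← hu]; exact u.inv_mul
  set W : Matrix (m ⊕ n) (m ⊕ n) α := (u⁻¹ : (Matrix (m ⊕ n) (m ⊕ n) α)ˣ).val with hW
  rw [← fromBlocks_toBlocks W, fromBlocks_multiply] at h1 h2
  rw [← fromBlocks_one] at h1 h2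
  have e1 := congrArg Matrix.toBlocks₁₁ h1
  have e2 := congrArg Matrix.toBlocks₁₁ h2
  simp only [toBlocks_fromBlocks₁₁] at e1 e2
  refine ⟨⟨P, W.toBlocks₁₁, ?_, ?_⟩, rfl⟩
  · rw [← e1]; simp
  · rw [← e2]; simp

end helpers

section stdhelp
variable {α : Type} [Ring α]

lemma aux_std_mul {m n p : Type} [Fintype n] [DecidableEq n] [DecidableEq m] (i : m) (k : n) (c : α)
    (T : Matrix n p α) (a : m) (l : p) :
    (Matrix.single i k c * T) a l = if i = a then c * T k l else 0 := by
  rcases eq_or_ne i a with rfl | h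
  · simp [Matrix.mul_apply, Matrix.single, ite_and, Finset.sum_ite_eq]
  · simp [Matrix.mul_apply, Matrix.single, ite_and, h]

lemma aux_mul_std {m n p : Type} [Fintype n] [DecidableEq n] [DecidableEq p] (k : n) (j : p) (c : α)
    (T : Matrix m n α) (a : m) (l : p) :
    (T * Matrix.single k j c) a l = if j = l then T a k * c else 0 := by
  rcases eq_or_ne j l with rfl | h
  · simp [Matrix.mul_apply, Matrix.single, ite_and, Finset.sum_ite_eq]
  · simp [Matrix.mul_apply, Matrix.single, ite_and, h]

lemma aux_std_T_std {m n p q : Type} [Fintype n] [DecidableEq n] [Fintype p] [DecidableEq p]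
    [DecidableEq m] [DecidableEq q]
    (i : m) (a : n) (b : p) (j : q) (T : Matrix n p α) :
    Matrix.single i a (1 : α) * T * Matrix.single b j (1 : α) =
      Matrix.single i j (T a b) := by
  ext x y
  rw [aux_mul_std, aux_std_mul]
  simp only [Matrix.single, of_apply, one_mul]
  rcases eq_or_ne j y with rfl | hj <;> rcases eq_or_ne i x with rfl | hi <;>
    simp [*, mul_one]

lemma aux_std_map {m n β : Type} [Ring β] [DecidableEq m] [DecidableEq n]
    (f : α →+* β) (i : m) (j : n) (c : α) :
    (Matrix.single i j c).map f = Matrix.single i j (f c) := by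
  ext a b
  simp only [Matrix.map_apply, Matrix.single, of_apply]
  split_ifs <;> simp

lemma aux_reindex_mul {m n : Type} [Fintype m] [Fintype n] [DecidableEq m] [DecidableEq n]
    (e : m ≃ n) (M N : Matrix m m α) :
    Matrix.reindex e e M * Matrix.reindex e e N = Matrix.reindex e e (M * N) := by
  rw [Matrix.reindex_apply, Matrix.reindex_apply, Matrix.reindex_apply,
    Matrix.submatrix_mul_equiv]

lemma aux_isUnit_reindex_fwd {m n : Type} [Fintype m] [Fintype n] [DecidableEq m]
    [DecidableEq n] (e : m ≃ n) (M : Matrix m m α) (h : IsUnit M) :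
    IsUnit (Matrix.reindex e e M) := by
  obtain ⟨u, hu⟩ := h
  refine ⟨⟨Matrix.reindex e e M, Matrix.reindex e e ((u⁻¹ : (Matrix m m α)ˣ).val), ?_, ?_⟩, rfl⟩
  · rw [aux_reindex_mul, ← hu, u.mul_inv, Matrix.reindex_apply, Matrix.submatrix_one_equiv]
  · rw [aux_reindex_mul, ← hu, u.inv_mul, Matrix.reindex_apply, Matrix.submatrix_one_equiv]

lemma aux_isUnit_reindex {m n : Type} [Fintype m] [Fintype n] [DecidableEq m] [DecidableEq n]
    (e : m ≃ n) (M : Matrix m m α) : IsUnit (Matrix.reindex e e M) ↔ IsUnit M := by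
  constructor
  · intro h
    have h2 := aux_isUnit_reindex_fwd e.symm _ h
    rwa [show Matrix.reindex e.symm e.symm (Matrix.reindex e e M) = M by
      ext i j; simp [Matrix.reindex_apply]] at h2
  · exact aux_isUnit_reindex_fwd e M

lemma aux_map_reindex {m n β : Type} [Ring β] (f : α → β) (e : m ≃ n) (M : Matrix m m α) :
    (Matrix.reindex e e M).map f = Matrix.reindex e e (M.map f) := rfl

end stdhelp

section main
variable {R A L : Type} [Ring R] [Ring A] [Ring L]

/-- `x` is an entry of the inverse of a matrix `ρ(S)` with `S` invertible over `A`. -/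
def Pgood (ε : R →+* A) (ρ : R →+* L) (x : L) : Prop :=
  ∃ (κ : Type) (_ : Fintype κ) (_ : DecidableEq κ) (S : Matrix κ κ R) (T : Matrix κ κ L)
    (i j : κ), IsUnit (S.map ε) ∧ S.map ρ * T = 1 ∧ T * S.map ρ = 1 ∧ T i j = x

variable (ε : R →+* A) (ρ : R →+* L)

lemma Pgood_rho (r : R) : Pgood ε ρ (ρ r) := by
  refine ⟨Fin 2, inferInstance, inferInstance, !![1, -r; 0, 1], !![1, ρ r; 0, 1], 0, 1,
    ?_, ?_, ?_, ?_⟩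
  · have hmap : (!![1, -r; 0, 1] : Matrix (Fin 2) (Fin 2) R).map ε = !![1, -(ε r); 0, 1] := by
      ext i j; fin_cases i <;> fin_cases j <;> simp [Matrix.map_apply]
    rw [hmap]
    exact ⟨⟨!![1, -(ε r); 0, 1], !![1, ε r; 0, 1],
      by rw [Matrix.mul_fin_two]; simp [Matrix.one_fin_two],
      by rw [Matrix.mul_fin_two]; simp [Matrix.one_fin_two]⟩, rfl⟩
  · have hmap : (!![1, -r; 0, 1] : Matrix (Fin 2) (Fin 2) R).map ρ = !![1, -(ρ r); 0, 1] := by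
      ext i j; fin_cases i <;> fin_cases j <;> simp [Matrix.map_apply]
    rw [hmap, Matrix.mul_fin_two]; simp [Matrix.one_fin_two]
  · have hmap : (!![1, -r; 0, 1] : Matrix (Fin 2) (Fin 2) R).map ρ = !![1, -(ρ r); 0, 1] := by
      ext i j; fin_cases i <;> fin_cases j <;> simp [Matrix.map_apply]
    rw [hmap, Matrix.mul_fin_two]; simp [Matrix.one_fin_two]
  · simp

lemma Pgood_one : Pgood ε ρ 1 := by
  simpa using Pgood_rho ε ρ 1

lemma Pgood_zero : Pgood ε ρ 0 := by
  simpa using Pgood_rho ε ρ 0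

lemma aux_T_std_T' {κ κ' μ ν : Type} [Fintype κ] [DecidableEq κ] [Fintype κ'] [DecidableEq κ']
    (T : Matrix μ κ L) (T' : Matrix κ' ν L) (i : μ) (j : κ) (k : κ') (l : ν) :
    (T * Matrix.single j k (1 : L) * T') i l = T i j * T' k l := by
  rw [Matrix.mul_assoc, Matrix.mul_apply]
  have : ∀ a : κ, T i a * (Matrix.single j k (1 : L) * T') a l
      = if j = a then T i a * T' k l else 0 := by
    intro a
    rw [aux_std_mul]
    split_ifs <;> simp
  simp only [this]
  simp [Finset.sum_ite_eq]

lemma Pgood_entry_blocks {κ κ' : Type} [Fintype κ] [DecidableEq κ] [Fintype κ'] [DecidableEq κ']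
    {S : Matrix κ κ R} {T : Matrix κ κ L} {S' : Matrix κ' κ' R} {T' : Matrix κ' κ' L}
    (c : Matrix κ κ' R)
    (hS : IsUnit (S.map ε)) (h1 : S.map ρ * T = 1) (h2 : T * S.map ρ = 1)
    (hS' : IsUnit (S'.map ε)) (h1' : S'.map ρ * T' = 1) (h2' : T' * S'.map ρ = 1)
    (i : κ) (l : κ') :
    Pgood ε ρ ((-(T * c.map ρ * T')) i l) := by
  refine ⟨κ ⊕ κ', inferInstance, inferInstance, fromBlocks S c 0 S',
    fromBlocks T (-(T * c.map ρ * T')) 0 T', Sum.inl i, Sum.inr l, ?_, ?_, ?_, rfl⟩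
  · rw [Matrix.fromBlocks_map, Matrix.map_zero _ (map_zero ε)]
    exact aux_tri _ hS hS'
  · rw [Matrix.fromBlocks_map, Matrix.map_zero _ (map_zero ρ), fromBlocks_multiply]
    rw [show S.map ρ * -(T * c.map ρ * T') + c.map ρ * T' = 0 by
      rw [Matrix.mul_neg, ← Matrix.mul_assoc, ← Matrix.mul_assoc, h1, Matrix.one_mul,
        neg_add_cancel]]
    simp [h1, h1', fromBlocks_one]
  · rw [Matrix.fromBlocks_map, Matrix.map_zero _ (map_zero ρ), fromBlocks_multiply]
    rw [show T * c.map ρ + -(T * c.map ρ * T') * S'.map ρ = 0 by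
      rw [Matrix.neg_mul, Matrix.mul_assoc (T * c.map ρ), h2', Matrix.mul_one,
        add_neg_cancel]]
    simp [h2, h2', fromBlocks_one]

lemma Pgood_mul (x y : L) (hx : Pgood ε ρ x) (hy : Pgood ε ρ y) : Pgood ε ρ (x * y) := by
  obtain ⟨κ, hκf, hκd, S, T, i, j, hS, h1, h2, rfl⟩ := hx
  obtain ⟨κ', hκ'f, hκ'd, S', T', k, l, hS', h1', h2', rfl⟩ := hy
  have := Pgood_entry_blocks ε ρ (-(Matrix.single j k (1 : R)))
    hS h1 h2 hS' h1' h2' i l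
  have hcρ : ((-(Matrix.single j k (1 : R))).map ρ) = -(Matrix.single j k (1 : L)) := by
    ext a b
    simp only [Matrix.map_apply, Matrix.neg_apply, map_neg]
    congr 1
    simp [Matrix.single, apply_ite ρ]
  rw [hcρ] at this
  rw [show -(T * -Matrix.single j k (1:L) * T') = T * Matrix.single j k (1:L) * T' by
    rw [Matrix.mul_neg, Matrix.neg_mul, neg_neg]] at this
  rwa [aux_T_std_T'] at this

lemma aux_map_negm {β γ m n : Type} [Ring β] [Ring γ] (f : β →+* γ) (M : Matrix m n β) :
    (-M).map f = -(M.map f) := by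
  ext a b; simp

lemma aux_map_addm {β γ m n : Type} [Ring β] [Ring γ] (f : β →+* γ) (M N : Matrix m n β) :
    (M + N).map f = M.map f + N.map f := by
  ext a b; simp

lemma aux_std_map_one {β γ m n : Type} [Ring β] [Ring γ] [DecidableEq m] [DecidableEq n]
    (f : β →+* γ) (i : m) (j : n) :
    (Matrix.single i j (1 : β)).map f = Matrix.single i j (1 : γ) := by
  ext a b
  simp [Matrix.single, apply_ite f]

lemma Pgood_add (x y : L) (hx : Pgood ε ρ x) (hy : Pgood ε ρ y) : Pgood ε ρ (x + y) := by
  obtain ⟨κ, hκf, hκd, S, T, i, j, hS, h1, h2, rfl⟩ := hx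
  obtain ⟨κ', hκ'f, hκ'd, S', T', k, l, hS', h1', h2', rfl⟩ := hy
  set c : Matrix κ κ' R :=
    -(S * Matrix.single i k (1 : R) + Matrix.single j l (1 : R) * S') with hc
  have hcρ : c.map ρ =
      -(S.map ρ * Matrix.single i k (1 : L) + Matrix.single j l (1 : L) * S'.map ρ) := by
    rw [hc, aux_map_negm, aux_map_addm, Matrix.map_mul, Matrix.map_mul,
      aux_std_map_one, aux_std_map_one]
  have key := Pgood_entry_blocks ε ρ c hS h1 h2 hS' h1' h2' i l
  rw [hcρ] at key
  have hX : -(T * -(S.map ρ * Matrix.single i k (1 : L) + Matrix.single j l (1 : L) * S'.map ρ)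
        * T') = Matrix.single i k (1 : L) * T' + T * Matrix.single j l (1 : L) := by
    rw [Matrix.mul_neg, Matrix.neg_mul, neg_neg, Matrix.mul_add, Matrix.add_mul]
    congr 1
    · rw [← Matrix.mul_assoc, h2, Matrix.one_mul]
    · rw [← Matrix.mul_assoc T, Matrix.mul_assoc (T * Matrix.single j l (1 : L)), h1',
        Matrix.mul_one]
  rw [hX] at key
  have hentry : (Matrix.single i k (1 : L) * T' + T * Matrix.single j l (1 : L)) i l
      = T i j + T' k l := by
    rw [Matrix.add_apply, aux_std_mul, aux_mul_std]
    simp [add_comm]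
  rwa [hentry] at key

/-- The rational closure as a subring of `L`. -/
def Qsub : Subring L where
  carrier := {x | Pgood ε ρ x}
  one_mem' := Pgood_one ε ρ
  zero_mem' := Pgood_zero ε ρ
  add_mem' := fun hx hy => Pgood_add ε ρ _ _ hx hy
  mul_mem' := fun hx hy => Pgood_mul ε ρ _ _ hx hy
  neg_mem' := fun {x} hx => by
    have := Pgood_mul ε ρ _ _ (Pgood_rho ε ρ (-1)) hx
    simpa using this

lemma aux_mapMatrix_inj {β γ m : Type} [Ring β] [Ring γ] [Fintype m] [DecidableEq m]
    (f : β →+* γ) (hf : Function.Injective f) :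
    Function.Injective (f.mapMatrix : Matrix m m β →+* Matrix m m γ) := by
  intro X Y h
  ext a b
  exact hf (congrFun (congrFun (congrArg (fun (Z : Matrix m m γ) => (Z : m → m → γ)) h) a) b)

lemma Pgood_all
    (hρ : ∀ (n : ℕ) (M : Matrix (Fin n) (Fin n) R), IsUnit (M.map ε) → IsUnit (M.map ρ))
    (huniv : ∀ (T : Type) [Ring T] (f : R →+* T),
      (∀ (n : ℕ) (M : Matrix (Fin n) (Fin n) R),
        IsUnit (M.map ε) → IsUnit (M.map f)) → ∃! g : L →+* T, g.comp ρ = f)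
    (x : L) : Pgood ε ρ x := by
  set Q : Subring L := Qsub ε ρ with hQ
  have hmem : ∀ r : R, ρ r ∈ Q := fun r => Pgood_rho ε ρ r
  set ρ' : R →+* Q := ρ.codRestrict Q hmem with hρ'
  have hinv : ∀ (n : ℕ) (M : Matrix (Fin n) (Fin n) R),
      IsUnit (M.map ε) → IsUnit (M.map ρ') := by
    intro n M hM
    obtain ⟨u, hu⟩ := hρ n M hM
    set T : Matrix (Fin n) (Fin n) L := (u⁻¹ : (Matrix (Fin n) (Fin n) L)ˣ).val with hT
    have h1 : M.map ρ * T = 1 := by rw [← hu, hT]; exact u.mul_inv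
    have h2 : T * M.map ρ = 1 := by rw [← hu, hT]; exact u.inv_mul
    have hTmem : ∀ a b, T a b ∈ Q :=
      fun a b => ⟨Fin n, inferInstance, inferInstance, M, T, a, b, hM, h1, h2, rfl⟩
    set TQ : Matrix (Fin n) (Fin n) Q := Matrix.of (fun a b => (⟨T a b, hTmem a b⟩ : Q))
      with hTQ
    have hsub : ∀ X : Matrix (Fin n) (Fin n) Q,
        (Q.subtype.mapMatrix X : Matrix (Fin n) (Fin n) L) = X.map Q.subtype :=
      fun X => rfl
    have hinj := aux_mapMatrix_inj (m := Fin n) Q.subtype Q.subtype_injective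
    have e1 : M.map ρ' * TQ = 1 := by
      apply hinj
      rw [_root_.map_mul, _root_.map_one]
      rw [hsub, hsub]
      have : (M.map ρ').map Q.subtype = M.map ρ := by
        rw [Matrix.map_map]; rfl
      rw [this]
      have : TQ.map Q.subtype = T := by ext a b; rfl
      rw [this, h1]
    have e2 : TQ * M.map ρ' = 1 := by
      apply hinj
      rw [_root_.map_mul, _root_.map_one]
      rw [hsub, hsub]
      have hA : (M.map ρ').map Q.subtype = M.map ρ := by
        rw [Matrix.map_map]; rfl
      have hB : TQ.map Q.subtype = T := by ext a b; rfl
      rw [hA, hB, h2]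
    exact ⟨⟨M.map ρ', TQ, e1, e2⟩, rfl⟩
  obtain ⟨g, hg, _⟩ := huniv Q ρ' hinv
  obtain ⟨g₀, _, huq⟩ := huniv L ρ hρ
  have hcomp : (Q.subtype.comp g).comp ρ = ρ := by
    rw [RingHom.comp_assoc, hg]; rfl
  have eA := huq _ hcomp
  have eB := huq (RingHom.id L) (by ext r; rfl)
  have : Q.subtype.comp g = RingHom.id L := eA.trans eB.symm
  have hx : (g x).val = x := congrArg (fun f : L →+* L => f x) this
  exact hx ▸ (g x).2

lemma aux_low {m n : Type} [Fintype m] [Fintype n] [DecidableEq m] [DecidableEq n]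
    {P : Matrix m m L} (C : Matrix n m L) {D : Matrix n n L}
    (hP : IsUnit P) (hD : IsUnit D) : IsUnit (fromBlocks P 0 C D) := by
  obtain ⟨u, hu⟩ := hP
  obtain ⟨v, hv⟩ := hD
  set P' : Matrix m m L := (u⁻¹ : (Matrix m m L)ˣ).val with hP'
  set D' : Matrix n n L := (v⁻¹ : (Matrix n n L)ˣ).val with hD'
  have hPP' : P * P' = 1 := by rw [← hu, hP']; exact u.mul_inv
  have hP'P : P' * P = 1 := by rw [← hu, hP']; exact u.inv_mul
  have hDD' : D * D' = 1 := by rw [← hv, hD']; exact v.mul_inv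
  have hD'D : D' * D = 1 := by rw [← hv, hD']; exact v.inv_mul
  refine ⟨⟨fromBlocks P 0 C D, fromBlocks P' 0 (-(D' * C * P')) D', ?_, ?_⟩, rfl⟩
  · rw [fromBlocks_multiply]
    rw [show C * P' + D * -(D' * C * P') = 0 by
      rw [Matrix.mul_neg, ← Matrix.mul_assoc, ← Matrix.mul_assoc, hDD', Matrix.one_mul,
        add_neg_cancel]]
    simp [hPP', hDD', fromBlocks_one]
  · rw [fromBlocks_multiply]
    rw [show -(D' * C * P') * P + D' * C = 0 by
      rw [Matrix.neg_mul, Matrix.mul_assoc (D' * C), hP'P, Matrix.mul_one, neg_add_cancel]]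
    simp [hP'P, hD'D, fromBlocks_one]

open scoped Classical in
/-- number of entries of `M` not in the image of `ρ` -/
noncomputable def badCount (ρ : R →+* L) {ι : Type} [Fintype ι] (M : Matrix ι ι L) : ℕ :=
  (Finset.univ.filter (fun p : ι × ι => M p.1 p.2 ∉ Set.range ρ)).card

lemma aux_zero_bad {ι : Type} [Fintype ι] [DecidableEq ι]
    (hρ : ∀ (n : ℕ) (M : Matrix (Fin n) (Fin n) R), IsUnit (M.map ε) → IsUnit (M.map ρ))
    (ε' : L →+* A) (hε' : ε'.comp ρ = ε)
    (M : Matrix ι ι L) (h0 : badCount ρ M = 0) (hM : IsUnit (M.map ε')) : IsUnit M := by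
  classical
  have h0' : (Finset.univ.filter (fun p : ι × ι => M p.1 p.2 ∉ Set.range ρ)).card = 0 := h0
  rw [Finset.card_eq_zero] at h0'
  have hall : ∀ i j : ι, M i j ∈ Set.range ρ := by
    intro i j
    by_contra hc
    exact Finset.eq_empty_iff_forall_notMem.mp h0' (i, j)
      (by simp only [Finset.mem_filter, Finset.mem_univ, true_and]; exact hc)
  choose N hN using fun i => fun j => hall i j
  set N' : Matrix ι ι R := Matrix.of N with hN'
  have hMN : N'.map ρ = M := by ext i j; exact hN i j
  set e := Fintype.equivFin ι with he
  have hNε : (Matrix.reindex e e N').map ε = Matrix.reindex e e (M.map ε') := by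
    rw [aux_map_reindex]
    congr 1
    rw [← hMN, Matrix.map_map]
    congr 1
    rw [← hε']; rfl
  have hMεunit : IsUnit ((Matrix.reindex e e N').map ε) := by
    rw [hNε]
    exact aux_isUnit_reindex_fwd e _ hM
  have := hρ (Fintype.card ι) (Matrix.reindex e e N') hMεunit
  rw [aux_map_reindex, hMN] at this
  exact (aux_isUnit_reindex e M).mp this

lemma aux_main
    (hρ : ∀ (n : ℕ) (M : Matrix (Fin n) (Fin n) R), IsUnit (M.map ε) → IsUnit (M.map ρ))
    (huniv : ∀ (T : Type) [Ring T] (f : R →+* T),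
      (∀ (n : ℕ) (M : Matrix (Fin n) (Fin n) R),
        IsUnit (M.map ε) → IsUnit (M.map f)) → ∃! g : L →+* T, g.comp ρ = f)
    (ε' : L →+* A) (hε' : ε'.comp ρ = ε) :
    ∀ (k : ℕ) (ι : Type) [Fintype ι] [DecidableEq ι] (M : Matrix ι ι L),
      badCount ρ M ≤ k → IsUnit (M.map ε') → IsUnit M := by
  intro k
  induction k with
  | zero =>
    intro ι _ _ M hbc hM
    exact aux_zero_bad ε ρ hρ ε' hε' M (Nat.le_zero.mp hbc) hM
  | succ k ih =>
    intro ι _ _ M hbc hM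
    classical
    by_cases h0 : badCount ρ M = 0
    · exact aux_zero_bad ε ρ hρ ε' hε' M h0 hM
    -- pick a bad entry
    have hpos : 0 < badCount ρ M := Nat.pos_of_ne_zero h0
    have hne : (Finset.univ.filter (fun p : ι × ι => M p.1 p.2 ∉ Set.range ρ)).Nonempty := by
      rw [← Finset.card_pos]; exact hpos
    obtain ⟨p, hp⟩ := hne
    obtain ⟨i, j⟩ := p
    have hbad : M i j ∉ Set.range ρ := by
      have := Finset.mem_filter.mp hp
      exact this.2
    set x : L := M i j with hx
    obtain ⟨κ, hκf, hκd, S, T, a, b, hS, h1, h2, hTab⟩ := Pgood_all ε ρ hρ huniv x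
    letI := hκf
    letI := hκd
    set D : Matrix κ κ L := S.map ρ with hD
    set M₀ : Matrix ι ι L := M - Matrix.single i j x with hM₀
    set Qm : Matrix ι κ L := -(Matrix.single i a (1 : L)) with hQm
    set Cm : Matrix κ ι L := Matrix.single b j (1 : L) with hCm
    set B : Matrix (ι ⊕ κ) (ι ⊕ κ) L := fromBlocks M₀ Qm Cm D with hB
    set U : Matrix (ι ⊕ κ) (ι ⊕ κ) L := fromBlocks 1 (Qm * T) 0 1 with hU
    set V : Matrix (ι ⊕ κ) (ι ⊕ κ) L := fromBlocks 1 0 (T * Cm) 1 with hV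
    -- the key factorization
    have hfact : U * fromBlocks M 0 0 D * V = B := by
      rw [hU, fromBlocks_multiply]
      have e1 : (1 : Matrix ι ι L) * M + Qm * T * (0 : Matrix κ ι L) = M := by
        rw [Matrix.one_mul, Matrix.mul_zero, add_zero]
      have e2 : (1 : Matrix ι ι L) * (0 : Matrix ι κ L) + Qm * T * D = Qm := by
        rw [Matrix.mul_zero, Matrix.mul_assoc, h2, Matrix.mul_one, zero_add]
      have e3 : (0 : Matrix κ ι L) * M + (1 : Matrix κ κ L) * (0 : Matrix κ ι L) = 0 := by
        rw [Matrix.zero_mul, Matrix.mul_zero, add_zero]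
      have e4 : (0 : Matrix κ ι L) * (0 : Matrix ι κ L) + (1 : Matrix κ κ L) * D = D := by
        rw [Matrix.zero_mul, Matrix.one_mul, zero_add]
      rw [e1, e2, e3, e4, hV, fromBlocks_multiply]
      have f1 : M * 1 + Qm * (T * Cm) = M₀ := by
        rw [Matrix.mul_one, hQm, hM₀, ← Matrix.mul_assoc, Matrix.neg_mul, Matrix.neg_mul,
          aux_std_T_std, hTab, sub_eq_add_neg]
      have f2 : M * (0 : Matrix ι κ L) + Qm * (1 : Matrix κ κ L) = Qm := by
        rw [Matrix.mul_zero, Matrix.mul_one, zero_add]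
      have f3 : (0 : Matrix κ ι L) * (1 : Matrix ι ι L) + D * (T * Cm) = Cm := by
        rw [Matrix.zero_mul, ← Matrix.mul_assoc, h1, Matrix.one_mul, zero_add]
      have f4 : (0 : Matrix κ ι L) * (0 : Matrix ι κ L) + D * 1 = D := by
        rw [Matrix.zero_mul, Matrix.mul_one, zero_add]
      rw [f1, f2, f3, f4, hB]
    -- units
    have hUunit : IsUnit U := aux_tri _ isUnit_one isUnit_one
    have hVunit : IsUnit V := aux_low _ isUnit_one isUnit_one
    have hDε : D.map ε' = S.map ε := by
      rw [hD, Matrix.map_map, ← hε']; rfl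
    have hDunitε : IsUnit (D.map ε') := by rw [hDε]; exact hS
    -- B.map ε' is a unit
    have hBε : IsUnit (B.map ε') := by
      rw [← hfact, Matrix.map_mul, Matrix.map_mul]
      have hUε : IsUnit (U.map ε') := by
        rw [hU, Matrix.fromBlocks_map, Matrix.map_zero _ (map_zero ε'),
          Matrix.map_one _ (map_zero ε') (map_one ε'), Matrix.map_one _ (map_zero ε') (map_one ε')]
        exact aux_tri _ isUnit_one isUnit_one
      have hVε : IsUnit (V.map ε') := by
        rw [hV, Matrix.fromBlocks_map, Matrix.map_zero _ (map_zero ε'),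
          Matrix.map_one _ (map_zero ε') (map_one ε'), Matrix.map_one _ (map_zero ε') (map_one ε')]
        exact aux_low _ isUnit_one isUnit_one
      have hdiagε : IsUnit ((fromBlocks M 0 0 D).map ε') := by
        rw [Matrix.fromBlocks_map, Matrix.map_zero _ (map_zero ε'), Matrix.map_zero _ (map_zero ε')]
        exact aux_diag hM hDunitε
      exact (hUε.mul hdiagε).mul hVε
    -- bad count of B decreases
    have hcount : badCount ρ B ≤ k := by
      have hsub : (Finset.univ.filter (fun q : (ι ⊕ κ) × (ι ⊕ κ) => B q.1 q.2 ∉ Set.range ρ)) ⊆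
          ((Finset.univ.filter (fun p : ι × ι => M p.1 p.2 ∉ Set.range ρ)).erase (i, j)).map
            ⟨fun p => (Sum.inl p.1, Sum.inl p.2), by
              intro p q h
              simp only [Prod.mk.injEq] at h
              exact Prod.ext (Sum.inl.inj h.1) (Sum.inl.inj h.2)⟩ := by
        intro q hq
        have hqbad : B q.1 q.2 ∉ Set.range ρ := (Finset.mem_filter.mp hq).2
        obtain ⟨q1, q2⟩ := q
        rcases q1 with x1 | x1 <;> rcases q2 with y1 | y1
        · -- top-left block
          have hBval : B (Sum.inl x1) (Sum.inl y1) = M₀ x1 y1 := rfl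
          rw [hBval] at hqbad
          by_cases hij : (x1, y1) = (i, j)
          · exfalso
            apply hqbad
            obtain ⟨hx1, hy1⟩ := Prod.mk.injEq .. ▸ hij
            subst hx1; subst hy1
            rw [hM₀]
            simp only [Matrix.sub_apply, Matrix.single, of_apply, and_self, if_true, ← hx]
            exact ⟨0, by simp⟩
          · rw [Finset.mem_map]
            refine ⟨(x1, y1), ?_, rfl⟩
            rw [Finset.mem_erase]
            refine ⟨hij, ?_⟩
            rw [Finset.mem_filter]
            refine ⟨Finset.mem_univ _, ?_⟩
            intro hrange
            apply hqbad
            rw [hM₀]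
            have hstd : Matrix.single i j x x1 y1 = 0 := by
              simp only [Matrix.single, of_apply]
              rw [if_neg]
              intro hcon
              exact hij (Prod.ext hcon.1.symm hcon.2.symm)
            simpa [Matrix.sub_apply, hstd] using hrange
        · -- top-right block : entries of Qm
          exfalso
          apply hqbad
          have hBval : B (Sum.inl x1) (Sum.inr y1) = Qm x1 y1 := rfl
          rw [hBval, hQm]
          simp only [Matrix.neg_apply, Matrix.single, of_apply]
          split_ifs
          · exact ⟨-1, by simp⟩
          · exact ⟨0, by simp⟩
        · -- bottom-left block : entries of Cm
          exfalso
          apply hqbad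
          have hBval : B (Sum.inr x1) (Sum.inl y1) = Cm x1 y1 := rfl
          rw [hBval, hCm]
          simp only [Matrix.single, of_apply]
          split_ifs
          · exact ⟨1, by simp⟩
          · exact ⟨0, by simp⟩
        · -- bottom-right block : entries of D = S.map ρ
          exfalso
          apply hqbad
          have hBval : B (Sum.inr x1) (Sum.inr y1) = ρ (S x1 y1) := rfl
          rw [hBval]
          exact ⟨S x1 y1, rfl⟩
      have hcard := Finset.card_le_card hsub
      rw [Finset.card_map, Finset.card_erase_of_mem hp] at hcard
      have : badCount ρ B ≤ badCount ρ M - 1 := hcard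
      omega
    have hBunit : IsUnit B := ih (ι ⊕ κ) B hcount hBε
    -- deduce that fromBlocks M 0 0 D is a unit
    have hdiag : IsUnit (fromBlocks M 0 0 D) := by
      have h5 : IsUnit (U * (fromBlocks M 0 0 D * V)) := by
        rw [← Matrix.mul_assoc, hfact]; exact hBunit
      have h6 : IsUnit (fromBlocks M 0 0 D * V) := by
        rw [← hUunit.unit_spec] at h5
        exact (Units.isUnit_units_mul hUunit.unit _).mp h5
      rw [← hVunit.unit_spec] at h6
      exact (Units.isUnit_mul_units _ hVunit.unit).mp h6
    exact aux_diag_rev hdiag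

end main

/-- Sheiham: let `ε : R → A` be a ring morphism, `Σ` the set of all
square matrices over `R` becoming invertible over `A`, and `ρ : R → L` a Cohn
localization of `R` inverting `Σ` (i.e. `ρ` sends `Σ` to invertible matrices and
is universal with this property), with `ε' : L → A` the induced extension of `ε`.
Then a square matrix `M` over `L` (an endomorphism of a f.g. free `L`-module)
is invertible if and only if its image `ε'(M)` over `A` is invertible. -/
theorem stmt9 {R A L : Type} [Ring R] [Ring A] [Ring L]
    (ε : R →+* A) (ρ : R →+* L)
    (hρ : ∀ (n : ℕ) (M : Matrix (Fin n) (Fin n) R),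
      IsUnit (M.map ε) → IsUnit (M.map ρ))
    (huniv : ∀ (T : Type) [Ring T] (f : R →+* T),
      (∀ (n : ℕ) (M : Matrix (Fin n) (Fin n) R),
        IsUnit (M.map ε) → IsUnit (M.map f)) →
      ∃! g : L →+* T, g.comp ρ = f)
    (ε' : L →+* A) (hε' : ε'.comp ρ = ε)
    (n : ℕ) (M : Matrix (Fin n) (Fin n) L) :
    IsUnit M ↔ IsUnit (M.map ε') := by
  constructor
  · intro h
    have := h.map (ε'.mapMatrix (m := Fin n))
    simpa using this
  · intro h
    exact aux_main ε ρ hρ huniv ε' hε' (badCount ρ M) (Fin n) M le_rfl h
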